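/- Let D : ℝ → ℝ ∪ {−∞} be upper semicontinuous and bounded above by d ∈ ℝ. Consider the family g_{γ,δ}(x) = −γ·(x − δ)² for γ > 0, δ ∈ ℝ, and define L_{γ,δ}(h) = (D + g_{γ,δ})⋆⋆(h) − g_{γ,δ}(h), where ⋆⋆ denotes the concave envelope. Then for every dense countable subset Υ of (0,∞) × ℝ and every h ∈ ℝ, the infimum over the family recovers D exactly: inf_{(γ,δ) ∈ Υ} L_{γ,δ}(h) = D(h). -/
import Mathlib


open Filter Set

/-- Multifractal-style Legendre transform (concave convention):
`legStar d f q = ⨅ h, (d + q·h) − f h`. -/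
noncomputable def legStar (d : ℝ) (f : ℝ → EReal) (q : ℝ) : EReal :=
  ⨅ h : ℝ, ((d + q * h : ℝ) : EReal) - f h

/-- Double Legendre transform. -/
noncomputable def legStar2 (d : ℝ) (f : ℝ → EReal) (x : ℝ) : EReal :=
  ⨅ q : ℝ, ((d + q * x : ℝ) : EReal) - legStar d f q

/-- Concave envelope: pointwise infimum of all affine majorants. -/
noncomputable def concEnv (f : ℝ → EReal) (x : ℝ) : EReal :=
  ⨅ p : {p : ℝ × ℝ // ∀ t, f t ≤ ((p.1 * t + p.2 : ℝ) : EReal)},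
    ((p.1.1 * x + p.1.2 : ℝ) : EReal)

set_option maxHeartbeats 2000000 in
/-- Theorem 1 for the parabolic template — the infimum of the
generalized Legendre spectra over any dense countable family of translates and
dilates recovers D exactly. -/
theorem inf_generalized_spectra_eq (D : ℝ → EReal) (d : ℝ)
    (husc : UpperSemicontinuous D) (hbd : ∀ h, D h ≤ (d : EReal))
    (Υ : Set (ℝ × ℝ)) (hsub : Υ ⊆ Set.Ioi (0:ℝ) ×ˢ (Set.univ : Set ℝ))
    (hcount : Υ.Countable)
    (hdense : Set.Ioi (0:ℝ) ×ˢ (Set.univ : Set ℝ) ⊆ closure Υ) :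
    ∀ h : ℝ,
      (⨅ p : Υ,
        (concEnv (fun x => D x + ((-(p.1.1) * (x - p.1.2)^2 : ℝ) : EReal)) h
          - ((-(p.1.1) * (h - p.1.2)^2 : ℝ) : EReal))) = D h := by
  intro h
  -- Lower bound: each term is ≥ D h.
  have hlow : D h ≤ ⨅ p : Υ,
      (concEnv (fun x => D x + ((-(p.1.1) * (x - p.1.2)^2 : ℝ) : EReal)) h
        - ((-(p.1.1) * (h - p.1.2)^2 : ℝ) : EReal)) := by
    refine le_iInf fun p => ?_
    have henv : D h + ((-(p.1.1) * (h - p.1.2)^2 : ℝ) : EReal) ≤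
        concEnv (fun x => D x + ((-(p.1.1) * (x - p.1.2)^2 : ℝ) : EReal)) h :=
      le_iInf fun q => q.2 h
    calc D h = D h + ((-(p.1.1) * (h - p.1.2)^2 : ℝ) : EReal)
          - ((-(p.1.1) * (h - p.1.2)^2 : ℝ) : EReal) := by
            rw [EReal.add_sub_cancel_right]
      _ ≤ _ := EReal.sub_le_sub henv le_rfl
  -- Upper bound: for every real c > D h, the infimum is ≤ c.
  have key : ∀ c : ℝ, D h < (c : EReal) → (⨅ p : Υ,
      (concEnv (fun x => D x + ((-(p.1.1) * (x - p.1.2)^2 : ℝ) : EReal)) h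
        - ((-(p.1.1) * (h - p.1.2)^2 : ℝ) : EReal))) ≤ (c : EReal) := by
    intro c hc
    obtain ⟨c₀, hc₀⟩ : ∃ c₀ : ℝ, D h < (c₀ : EReal) ∧ c₀ < c := by
      obtain ⟨c₀, h1, h2⟩ := EReal.exists_between_coe_real hc
      exact ⟨c₀, h1, by exact_mod_cast h2⟩
    set ε : ℝ := c - c₀ with hε
    have hεpos : 0 < ε := by simp [hε]; linarith [hc₀.2]
    -- usc neighborhood
    have hev : ∀ᶠ x in nhds h, D x < (c₀ : EReal) := husc h _ hc₀.1
    obtain ⟨r, hrpos, hr⟩ := Metric.eventually_nhds_iff.1 hev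
    set γ : ℝ := max 1 (8 * (d - c₀) / r ^ 2) with hγdef
    have hγ1 : (1:ℝ) ≤ γ := le_max_left _ _
    have hγpos : 0 < γ := lt_of_lt_of_le one_pos hγ1
    have hγbig : 8 * (d - c₀) / r ^ 2 ≤ γ := le_max_right _ _
    set η : ℝ := min (r / 2) (min (γ / 2) (Real.sqrt (ε / (2 * γ)))) with hηdef
    have hηpos : 0 < η := by
      refine lt_min (by positivity) (lt_min (by positivity) ?_)
      exact Real.sqrt_pos.2 (by positivity)
    -- find a point of Υ near (γ, h)
    have hmem : ((γ, h) : ℝ × ℝ) ∈ closure Υ :=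
      hdense ⟨hγpos, trivial⟩
    obtain ⟨q, hqΥ, hqdist⟩ := Metric.mem_closure_iff.1 hmem η hηpos
    obtain ⟨γ', δ'⟩ := q
    have hq := hsub hqΥ
    have hγ'pos : 0 < γ' := hq.1
    have hd1 : |γ - γ'| < η := by
      have := le_of_lt hqdist
      have h1 : dist γ γ' ≤ dist ((γ, h) : ℝ × ℝ) (γ', δ') := le_max_left _ _
      calc |γ - γ'| = dist γ γ' := (Real.dist_eq _ _).symm
        _ ≤ _ := h1
        _ < η := hqdist
    have hd2 : |h - δ'| < η := by
      have h1 : dist h δ' ≤ dist ((γ, h) : ℝ × ℝ) (γ', δ') := le_max_right _ _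
      calc |h - δ'| = dist h δ' := (Real.dist_eq _ _).symm
        _ ≤ _ := h1
        _ < η := hqdist
    have hηr : η ≤ r / 2 := min_le_left _ _
    have hηγ : η ≤ γ / 2 := le_trans (min_le_right _ _) (min_le_left _ _)
    have hηs : η ≤ Real.sqrt (ε / (2 * γ)) :=
      le_trans (min_le_right _ _) (min_le_right _ _)
    have hγ'lb : γ / 2 ≤ γ' := by
      have := abs_lt.1 hd1
      linarith [this.1, this.2]
    have hγ'ub : γ' ≤ 2 * γ := by
      have := abs_lt.1 hd1
      linarith [this.1, this.2]
    have hδ'r : |h - δ'| ≤ r / 2 := le_trans hd2.le hηr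
    -- the constant c₀ is an affine majorant of D + g_{γ',δ'}
    have hmaj : ∀ t : ℝ, D t + ((-γ' * (t - δ')^2 : ℝ) : EReal)
        ≤ (((0:ℝ) * t + c₀ : ℝ) : EReal) := by
      intro t
      rcases lt_or_ge (dist t h) r with ht | ht
      · have h1 : D t ≤ (c₀ : EReal) := (hr ht).le
        have h2 : ((-γ' * (t - δ')^2 : ℝ) : EReal) ≤ ((0:ℝ) : EReal) := by
          exact_mod_cast (by nlinarith [sq_nonneg (t - δ')] : -γ' * (t - δ')^2 ≤ (0:ℝ))
        calc D t + ((-γ' * (t - δ')^2 : ℝ) : EReal) ≤ (c₀ : EReal) + ((0:ℝ) : EReal) :=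
              add_le_add h1 h2
          _ = (((0:ℝ) * t + c₀ : ℝ) : EReal) := by norm_cast; ring
      · have htd : r / 2 ≤ |t - δ'| := by
          have h1 : r ≤ |t - h| := by rwa [Real.dist_eq] at ht
          have h2 : |t - h| ≤ |t - δ'| + |h - δ'| := by
            have := abs_sub_abs_le_abs_sub (t - δ') (h - δ')
            calc |t - h| = |(t - δ') - (h - δ')| := by ring_nf
              _ ≤ |t - δ'| + |h - δ'| := abs_sub _ _
          linarith
        have hsq : (r / 2)^2 ≤ (t - δ')^2 := by
          have := sq_abs (t - δ')
          nlinarith [abs_nonneg (t - δ'), hrpos]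
        have hkey : d - c₀ ≤ γ' * (t - δ')^2 := by
          have h8 : 8 * (d - c₀) ≤ γ * r ^ 2 := by
            have := (div_le_iff₀ (by positivity : (0:ℝ) < r ^ 2)).1 hγbig
            linarith
          nlinarith [hγ'lb, hγpos, sq_nonneg r]
        have h2 : ((-γ' * (t - δ')^2 : ℝ) : EReal) ≤ ((c₀ - d : ℝ) : EReal) := by
          exact_mod_cast (by linarith : -γ' * (t - δ')^2 ≤ c₀ - d)
        calc D t + ((-γ' * (t - δ')^2 : ℝ) : EReal)
            ≤ (d : EReal) + ((c₀ - d : ℝ) : EReal) := add_le_add (hbd t) h2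
          _ = (((0:ℝ) * t + c₀ : ℝ) : EReal) := by norm_cast; ring
    have henv : concEnv (fun x => D x + ((-γ' * (x - δ')^2 : ℝ) : EReal)) h
        ≤ (((0:ℝ) * h + c₀ : ℝ) : EReal) :=
      iInf_le _ (⟨((0:ℝ), c₀), hmaj⟩ :
        {p : ℝ × ℝ // ∀ t, (fun x => D x + ((-γ' * (x - δ')^2 : ℝ) : EReal)) t
          ≤ ((p.1 * t + p.2 : ℝ) : EReal)})
    -- the correction term is small
    have hsmall : γ' * (h - δ')^2 ≤ ε := by
      have hsq : (h - δ')^2 ≤ ε / (2 * γ) := by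
        have h1 : |h - δ'| ≤ Real.sqrt (ε / (2 * γ)) := le_trans hd2.le hηs
        have h2 := Real.sq_sqrt (by positivity : (0:ℝ) ≤ ε / (2 * γ))
        calc (h - δ')^2 = |h - δ'|^2 := (sq_abs _).symm
          _ ≤ Real.sqrt (ε / (2 * γ)) ^ 2 := pow_le_pow_left₀ (abs_nonneg _) h1 2
          _ = ε / (2 * γ) := h2
      have hstep : γ' * (h - δ')^2 ≤ 2 * γ * (ε / (2 * γ)) :=
        mul_le_mul hγ'ub hsq (sq_nonneg _) (by positivity)
      calc γ' * (h - δ')^2 ≤ 2 * γ * (ε / (2 * γ)) := hstep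
        _ = ε := by field_simp
    have hterm : concEnv (fun x => D x + ((-γ' * (x - δ')^2 : ℝ) : EReal)) h
        - ((-γ' * (h - δ')^2 : ℝ) : EReal) ≤ (c : EReal) := by
      calc concEnv (fun x => D x + ((-γ' * (x - δ')^2 : ℝ) : EReal)) h
            - ((-γ' * (h - δ')^2 : ℝ) : EReal)
          ≤ (((0:ℝ) * h + c₀ : ℝ) : EReal) - ((-γ' * (h - δ')^2 : ℝ) : EReal) :=
            EReal.sub_le_sub henv le_rfl
        _ = (((0:ℝ) * h + c₀ - (-γ' * (h - δ')^2) : ℝ) : EReal) := by norm_cast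
        _ ≤ (c : EReal) := by
            apply EReal.coe_le_coe_iff.2
            simp only [zero_mul, zero_add]
            linarith
    have h0 := iInf_le (fun p : Υ =>
        (concEnv (fun x => D x + ((-(p.1.1) * (x - p.1.2)^2 : ℝ) : EReal)) h
          - ((-(p.1.1) * (h - p.1.2)^2 : ℝ) : EReal))) (⟨(γ', δ'), hqΥ⟩ : Υ)
    simp only at h0
    exact le_trans h0 hterm
  -- conclude
  refine le_antisymm ?_ hlow
  by_contra hcon
  push_neg at hcon
  have hDtop : D h < ⊤ := lt_of_le_of_lt (hbd h) (EReal.coe_lt_top d)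
  obtain ⟨c, h1, h2⟩ := EReal.exists_between_coe_real hcon
  exact absurd (key c h1) (not_le.2 h2)
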